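/- If H is a connected elder graph, then there exists an outbranching T that is a subgraph of H with V(T) = V(H) such that the pair (H, T) is a vineyard. -/

import Mathlib

structure Dgraph (V : Type) where
  adj : V → V → Prop
  asym : ∀ u v, adj u v → ¬ adj v u

def Dgraph.Fork {V : Type} (H : Dgraph V) (u v : V) : Prop :=
  u ≠ v ∧ ¬ H.adj u v ∧ ¬ H.adj v u ∧ ∃ w, H.adj u w ∧ H.adj v w

def Dgraph.Elder {V : Type} (H : Dgraph V) : Prop :=
  ∀ u v, ¬ H.Fork u v

def Dgraph.Connected {V : Type} (H : Dgraph V) : Prop :=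
  Nonempty V ∧ ∀ u v : V, Relation.ReflTransGen (fun a b => H.adj a b ∨ H.adj b a) u v

def IsOutbranching {V : Type} (T : V → V → Prop) (r : V) : Prop :=
  (∀ v, Relation.ReflTransGen T r v) ∧ (∀ u, ¬ T u r) ∧ (∀ v, v ≠ r → ∃! u, T u v)

def IsVineyard {V : Type} (H : Dgraph V) (T : V → V → Prop) (r : V) : Prop :=
  IsOutbranching T r ∧ (∀ u v, T u v → H.adj u v) ∧
    ∀ u v, H.adj u v → Relation.ReflTransGen T u v ∨ Relation.ReflTransGen T v u

section Helpers

variable {V : Type}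

private lemma rtg_of_rtg {f g : V → V → Prop} (h : ∀ a b, f a b → Relation.ReflTransGen g a b)
    {a b : V} (hab : Relation.ReflTransGen f a b) : Relation.ReflTransGen g a b := by
  induction hab with
  | refl => exact Relation.ReflTransGen.refl
  | tail _ h2 ih => exact ih.trans (h _ _ h2)

private lemma chain'_head_rtg {T : V → V → Prop} :
    ∀ {l : List V} {a b : V}, List.Chain' T (a :: l) → b ∈ a :: l →
      Relation.ReflTransGen T a b := by
  intro l
  induction l with
  | nil =>
      intro a b _ hb
      simp only [List.mem_singleton] at hb
      subst hb; exact Relation.ReflTransGen.refl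
  | cons c l ih =>
      intro a b hc hb
      rcases List.mem_cons.1 hb with rfl | hb
      · exact Relation.ReflTransGen.refl
      · have h1 : T a c := (List.isChain_cons_cons.1 hc).1
        exact (Relation.ReflTransGen.single h1).trans (ih (List.isChain_cons_cons.1 hc).2 hb)

private lemma chain'_rtg_getLast {T : V → V → Prop} {l : List V} (hc : List.Chain' T l)
    {a : V} (ha : a ∈ l) (h : l ≠ []) : Relation.ReflTransGen T a (l.getLast h) := by
  obtain ⟨s, t, rfl⟩ := List.append_of_mem ha
  have hs : List.Chain' T (a :: t) := hc.suffix ⟨s, rfl⟩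
  have hgl : (s ++ a :: t).getLast h = (a :: t).getLast (by simp) := by
    rw [List.getLast_append]
    simp
  rw [hgl]
  exact chain'_head_rtg hs (List.getLast_mem _)

private lemma exists_first {Q : V → Prop} : ∀ {l : List V}, (∃ a ∈ l, Q a) →
    ∃ A b B, l = A ++ b :: B ∧ Q b ∧ ∀ a ∈ A, ¬ Q a := by
  intro l
  induction l with
  | nil => simp
  | cons c l ih =>
      intro h
      by_cases hc : Q c
      · exact ⟨[], c, l, rfl, hc, by simp⟩
      · obtain ⟨a, ha, hQ⟩ := h
        rcases List.mem_cons.1 ha with rfl | ha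
        · exact absurd hQ hc
        obtain ⟨A, b, B, rfl, hb, hA⟩ := ih ⟨a, ha, hQ⟩
        refine ⟨c :: A, b, B, rfl, hb, ?_⟩
        rintro x hx
        rcases List.mem_cons.1 hx with rfl | hx
        exacts [hc, hA x hx]

private lemma chain'_imp_mem {T T' : V → V → Prop} :
    ∀ {l : List V}, List.Chain' T l → (∀ a ∈ l, ∀ b ∈ l, T a b → T' a b) → List.Chain' T' l := by
  intro l
  induction l with
  | nil => intro _ _; exact List.isChain_nil
  | cons c l ih =>
      intro hc himp
      cases l with
      | nil => exact List.isChain_singleton c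
      | cons d l =>
          rw [List.Chain', List.isChain_cons_cons] at hc ⊢
          refine ⟨himp c (by simp) d (by simp) hc.1, ih hc.2 ?_⟩
          intro a ha b hb hab
          exact himp a (List.mem_cons_of_mem _ ha) b (List.mem_cons_of_mem _ hb) hab

end Helpers

section Main

variable {V : Type} [Fintype V] [DecidableEq V]

/-- The invariant maintained during the DFS-like construction. -/
structure DfsState (H : Dgraph V) (S : Finset V) (T : V → V → Prop) (r : V) (P : List V) : Prop where
  sub : ∀ u v, T u v → H.adj u v
  dom : ∀ u v, T u v → u ∈ S ∧ v ∈ S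
  rootMem : r ∈ S
  reach : ∀ v ∈ S, Relation.ReflTransGen T r v
  noIn : ∀ u, ¬ T u r
  uniq : ∀ v ∈ S, v ≠ r → ∃! u, T u v
  comp : ∀ u ∈ S, ∀ v ∈ S, H.adj u v →
    Relation.ReflTransGen T u v ∨ Relation.ReflTransGen T v u
  pathChain : List.Chain' T P
  pathHead : P ≠ [] → P.head? = some r
  pathMem : ∀ p ∈ P, p ∈ S
  pathNodup : P.Nodup
  frontier : ∀ z, z ∉ S → ∀ w ∈ S, (H.adj z w ∨ H.adj w z) → w ∈ P

private lemma finish_state (H : Dgraph V) (hconn : H.Connected) {S : Finset V}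
    {T : V → V → Prop} {r : V} (st : DfsState H S T r []) :
    ∃ (T' : V → V → Prop) (r' : V), IsVineyard H T' r' := by
  have hall : ∀ v : V, v ∈ S := by
    intro v
    have h := hconn.2 r v
    induction h with
    | refl => exact st.rootMem
    | tail _ h2 ih =>
        rename_i b c _
        by_contra hc
        have := st.frontier c hc b ih (h2.symm)
        simp at this
  refine ⟨T, r, ⟨⟨fun v => st.reach v (hall v), st.noIn, fun v hv => st.uniq v (hall v) hv⟩,
    st.sub, fun u v huv => st.comp u (hall u) v (hall v) huv⟩⟩

private lemma main_ind (H : Dgraph V) (helder : H.Elder) (hconn : H.Connected) :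
    ∀ (n : ℕ) (S : Finset V) (T : V → V → Prop) (r : V) (P : List V),
      2 * Sᶜ.card + P.length ≤ n → DfsState H S T r P →
      ∃ (T' : V → V → Prop) (r' : V), IsVineyard H T' r' := by
  intro n
  induction n with
  | zero =>
      intro S T r P hm st
      have hP : P = [] := by
        have : P.length = 0 := by omega
        exact List.length_eq_zero_iff.1 this
      exact finish_state H hconn (hP ▸ st)
  | succ n ih =>
      intro S T r P hm st
      by_cases hP : P = []
      · exact finish_state H hconn (hP ▸ st)
      -- x is the current vertex, the last element of P
      set x := P.getLast hP with hx
      have hxP : x ∈ P := List.getLast_mem hP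
      have hxS : x ∈ S := st.pathMem x hxP
      by_cases hy : ∃ y, y ∉ S ∧ (H.adj x y ∨ H.adj y x)
      · obtain ⟨y, hyS, hyadj⟩ := hy
        have hcard : (insert y S)ᶜ.card < Sᶜ.card := by
          have hy' : y ∈ Sᶜ := Finset.mem_compl.2 hyS
          have : (insert y S)ᶜ = Sᶜ.erase y := by
            ext a; simp [Finset.mem_erase, and_comm, not_or]
          rw [this, Finset.card_erase_of_mem hy']
          exact Nat.sub_lt (Finset.card_pos.2 ⟨y, hy'⟩) one_pos
        -- memberships of P in S, y ∉ P
        have hyP : y ∉ P := fun h => hyS (st.pathMem y h)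
        by_cases hin : ∃ p ∈ P, H.adj y p
        · -- insert or re-root
          obtain ⟨A, p, B, hPeq, hyp, hA⟩ := exists_first hin
          rcases List.eq_nil_or_concat A with rfl | ⟨A₀, q, hAeq⟩
          · -- re-root: p is the root r
            simp only [List.nil_append] at hPeq
            have hpr : p = r := by
              have h1 := st.pathHead hP
              rw [hPeq] at h1
              simpa using h1
            subst hpr
            set T' : V → V → Prop := fun a b => T a b ∨ (a = y ∧ b = p) with hT'
            have hmono : ∀ a b, T a b → T' a b := fun a b h => Or.inl h
            have hrtg : ∀ {a b}, Relation.ReflTransGen T a b → Relation.ReflTransGen T' a b :=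
              fun h => Relation.ReflTransGen.mono hmono _ _ h
            have hreach : ∀ v ∈ S, Relation.ReflTransGen T' y v := fun v hv =>
              Relation.ReflTransGen.head (Or.inr ⟨rfl, rfl⟩) (hrtg (st.reach v hv))
            refine ih (insert y S) T' y (y :: P)
              (by simp only [List.length_cons]; omega) ?_
            refine ⟨?_, ?_, ?_, ?_, ?_, ?_, ?_, ?_, ?_, ?_, ?_, ?_⟩
            · rintro u v (h | ⟨rfl, rfl⟩)
              exacts [st.sub _ _ h, hyp]
            · rintro u v (h | ⟨rfl, rfl⟩)
              · exact ⟨Finset.mem_insert_of_mem (st.dom _ _ h).1,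
                  Finset.mem_insert_of_mem (st.dom _ _ h).2⟩
              · exact ⟨Finset.mem_insert_self _ _, Finset.mem_insert_of_mem st.rootMem⟩
            · exact Finset.mem_insert_self _ _
            · intro v hv
              rcases Finset.mem_insert.1 hv with hv' | hv'
              · subst hv'; exact Relation.ReflTransGen.refl
              · exact hreach v hv'
            · rintro u (h | ⟨-, h2⟩)
              · exact hyS (st.dom _ _ h).2
              · exact hyS (by rw [h2]; exact st.rootMem)
            · intro v hv hvy
              rcases Finset.mem_insert.1 hv with hv' | hv'
              · exact absurd hv' hvy
              · by_cases hvr : v = p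
                · subst hvr
                  refine ⟨y, Or.inr ⟨rfl, rfl⟩, ?_⟩
                  rintro u (h | ⟨rfl, -⟩)
                  · exact absurd h (st.noIn u)
                  · rfl
                · obtain ⟨u, hu, hun⟩ := st.uniq v hv' hvr
                  refine ⟨u, Or.inl hu, ?_⟩
                  rintro u' (h | ⟨-, h2⟩)
                  · exact hun u' h
                  · exact absurd h2 hvr
            · intro u hu v hv hadj
              rcases Finset.mem_insert.1 hu with hu' | hu' <;>
                rcases Finset.mem_insert.1 hv with hv' | hv'
              · subst hu'; subst hv'; exact Or.inl Relation.ReflTransGen.refl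
              · subst hu'; exact Or.inl (hreach v hv')
              · subst hv'; exact Or.inr (hreach u hu')
              · exact (st.comp u hu' v hv' hadj).imp hrtg hrtg
            · rw [hPeq, List.Chain', List.isChain_cons_cons]
              refine ⟨Or.inr ⟨rfl, rfl⟩, ?_⟩
              rw [← hPeq]
              exact st.pathChain.imp hmono
            · intro _; rfl
            · intro a ha
              rcases List.mem_cons.1 ha with rfl | ha
              · exact Finset.mem_insert_self _ _
              · exact Finset.mem_insert_of_mem (st.pathMem a ha)
            · exact List.nodup_cons.2 ⟨hyP, st.pathNodup⟩
            · intro z hz w hw hadj2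
              rcases Finset.mem_insert.1 hw with hw' | hw'
              · subst hw'; exact List.mem_cons_self
              · have hzS : z ∉ S := fun h => hz (Finset.mem_insert_of_mem h)
                exact List.mem_cons_of_mem _ (st.frontier z hzS w hw' hadj2)
          · -- insert y between q and p
            have hAeq' : A = A₀ ++ [q] := by simpa [List.concat_eq_append] using hAeq
            have hP1 : P = (A₀ ++ [q]) ++ (p :: B) := by rw [hPeq, hAeq']
            have hqA : q ∈ A := by rw [hAeq']; simp
            have hqS : q ∈ S := st.pathMem q (by rw [hP1]; exact List.mem_append_left _ (by simp))
            have hpS : p ∈ S := st.pathMem p (by rw [hP1]; exact List.mem_append_right _ (by simp))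
            have hnd := st.pathNodup
            rw [hP1, List.nodup_append] at hnd
            obtain ⟨ndA, ndB, disj⟩ := hnd
            have hqnotin : q ∉ p :: B := fun h => disj q (by simp) q h rfl
            have hpnotinA : p ∉ A₀ ++ [q] := fun h => disj p h p (by simp) rfl
            have hrA : r ∈ A₀ ++ [q] := by
              have h1 := st.pathHead hP
              rw [hP1, List.head?_append] at h1
              cases hh : (A₀ ++ [q]).head? with
              | none =>
                  exact absurd (List.head?_eq_none_iff.1 hh) (by simp)
              | some a =>
                  rw [hh] at h1
                  have h2 : a = r := Option.some.inj h1
                  subst h2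
                  exact List.mem_of_mem_head? hh
            have hpr : p ≠ r := fun h => disj p (by rw [h]; exact hrA) p List.mem_cons_self rfl
            have hchain := st.pathChain
            rw [hP1, List.Chain', List.isChain_append] at hchain
            obtain ⟨hcA, hcB, hlink⟩ := hchain
            have hTqp : T q p := by
              apply hlink q ?_ p ?_
              · simp
              · rfl
            have hqy : H.adj q y := by
              by_contra hqy
              exact helder y q ⟨fun h => hyS (by rw [h]; exact hqS), hA q hqA, hqy,
                p, hyp, st.sub q p hTqp⟩
            set T' : V → V → Prop := fun a b =>
              (T a b ∧ ¬(a = q ∧ b = p)) ∨ (a = q ∧ b = y) ∨ (a = y ∧ b = p) with hT'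
            have hL2 : ∀ a b, T a b → Relation.ReflTransGen T' a b := by
              intro a b h
              by_cases hab : a = q ∧ b = p
              · obtain ⟨rfl, rfl⟩ := hab
                refine Relation.ReflTransGen.tail (b := y) (Relation.ReflTransGen.single ?_) ?_
                · exact Or.inr (Or.inl ⟨rfl, rfl⟩)
                · exact Or.inr (Or.inr ⟨rfl, rfl⟩)
              · exact Relation.ReflTransGen.single (Or.inl ⟨h, hab⟩)
            have hrtg : ∀ {a b}, Relation.ReflTransGen T a b → Relation.ReflTransGen T' a b :=
              fun h => rtg_of_rtg hL2 h
            have hcA' : List.Chain' T' (A₀ ++ [q]) := by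
              refine chain'_imp_mem hcA ?_
              intro a ha b hb hab
              exact Or.inl ⟨hab, fun hc => hpnotinA (hc.2 ▸ hb)⟩
            have hcB' : List.Chain' T' (y :: p :: B) := by
              rw [List.Chain', List.isChain_cons_cons]
              refine ⟨Or.inr (Or.inr ⟨rfl, rfl⟩), chain'_imp_mem hcB ?_⟩
              intro a ha b hb hab
              exact Or.inl ⟨hab, fun hc => hqnotin (hc.1 ▸ ha)⟩
            have hcP' : List.Chain' T' ((A₀ ++ [q]) ++ (y :: p :: B)) := by
              rw [List.Chain', List.isChain_append]
              refine ⟨hcA', hcB', ?_⟩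
              intro a ha b hb
              simp only [Option.mem_def] at ha hb
              rw [List.getLast?_concat] at ha
              simp only [List.head?_cons, Option.some.injEq] at ha hb
              show (T a b ∧ ¬(a = q ∧ b = p)) ∨ (a = q ∧ b = y) ∨ (a = y ∧ b = p)
              exact Or.inr (Or.inl ⟨ha.symm, hb.symm⟩)
            have hkey : ∀ w ∈ P,
                Relation.ReflTransGen T' w y ∨ Relation.ReflTransGen T' y w := by
              intro w hw
              rw [hP1] at hw
              rcases List.mem_append.1 hw with hw | hw
              · left
                have hpre : List.Chain' T' ((A₀ ++ [q]) ++ [y]) := by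
                  rw [List.Chain', List.isChain_append]
                  refine ⟨hcA', List.isChain_singleton y, ?_⟩
                  intro a ha b hb
                  simp only [Option.mem_def] at ha hb
                  rw [List.getLast?_concat] at ha
                  simp only [List.head?_cons, Option.some.injEq] at ha hb
                  show (T a b ∧ ¬(a = q ∧ b = p)) ∨ (a = q ∧ b = y) ∨ (a = y ∧ b = p)
                  exact Or.inr (Or.inl ⟨ha.symm, hb.symm⟩)
                have hne : (A₀ ++ [q]) ++ [y] ≠ [] := by simp
                have hgl : ((A₀ ++ [q]) ++ [y]).getLast hne = y := by
                  rw [List.getLast_append]; simp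
                have := chain'_rtg_getLast hpre (List.mem_append_left _ hw) hne
                rwa [hgl] at this
              · right
                exact chain'_head_rtg hcB' (List.mem_cons_of_mem _ hw)
            refine ih (insert y S) T' r ((A₀ ++ [q]) ++ (y :: p :: B))
              (by
                have hlen : ((A₀ ++ [q]) ++ (y :: p :: B)).length = P.length + 1 := by
                  rw [hP1]; simp only [List.length_append, List.length_cons]; omega
                omega) ?_
            refine ⟨?_, ?_, ?_, ?_, ?_, ?_, ?_, ?_, ?_, ?_, ?_, ?_⟩
            · rintro u v (⟨h, -⟩ | ⟨rfl, rfl⟩ | ⟨rfl, rfl⟩)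
              exacts [st.sub _ _ h, hqy, hyp]
            · rintro u v (⟨h, -⟩ | ⟨rfl, rfl⟩ | ⟨rfl, rfl⟩)
              · exact ⟨Finset.mem_insert_of_mem (st.dom _ _ h).1,
                  Finset.mem_insert_of_mem (st.dom _ _ h).2⟩
              · exact ⟨Finset.mem_insert_of_mem hqS, Finset.mem_insert_self _ _⟩
              · exact ⟨Finset.mem_insert_self _ _, Finset.mem_insert_of_mem hpS⟩
            · exact Finset.mem_insert_of_mem st.rootMem
            · intro v hv
              rcases Finset.mem_insert.1 hv with hv' | hv'
              · subst hv'
                exact (hrtg (st.reach q hqS)).tail (Or.inr (Or.inl ⟨rfl, rfl⟩))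
              · exact hrtg (st.reach v hv')
            · rintro u (⟨h, -⟩ | ⟨-, h2⟩ | ⟨-, h2⟩)
              · exact st.noIn u h
              · exact hyS (by rw [← h2]; exact st.rootMem)
              · exact hpr h2.symm
            · intro v hv hvr
              rcases Finset.mem_insert.1 hv with hv' | hv'
              · subst hv'
                refine ⟨q, Or.inr (Or.inl ⟨rfl, rfl⟩), ?_⟩
                rintro u (⟨h, -⟩ | ⟨rfl, -⟩ | ⟨rfl, h2⟩)
                · exact absurd (st.dom _ _ h).2 hyS
                · rfl
                · exact absurd (by rw [h2]; exact hpS) hyS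
              · by_cases hvp : v = p
                · refine ⟨y, by rw [hvp]; exact Or.inr (Or.inr ⟨rfl, rfl⟩), ?_⟩
                  intro u hu
                  rw [hvp] at hu
                  rcases hu with ⟨h, hne2⟩ | ⟨rfl, h2⟩ | ⟨rfl, -⟩
                  · obtain ⟨w, -, hun⟩ := st.uniq p hpS hpr
                    have h1 : u = q := (hun u h).trans (hun q hTqp).symm
                    exact absurd ⟨h1, rfl⟩ hne2
                  · exact absurd (by rw [← h2]; exact hpS) hyS
                  · rfl
                · obtain ⟨u, hu, hun⟩ := st.uniq v hv' hvr
                  refine ⟨u, Or.inl ⟨hu, fun hc => hvp hc.2⟩, ?_⟩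
                  rintro u' (⟨h, -⟩ | ⟨-, h2⟩ | ⟨-, h2⟩)
                  · exact hun u' h
                  · exact absurd (by rw [← h2]; exact hv') hyS
                  · exact absurd h2 hvp
            · intro u hu v hv hadj
              rcases Finset.mem_insert.1 hu with hu' | hu' <;>
                rcases Finset.mem_insert.1 hv with hv' | hv'
              · rw [hu', hv']; exact Or.inl Relation.ReflTransGen.refl
              · have hvP := st.frontier y hyS v hv' (by rw [← hu']; exact Or.inl hadj)
                rw [hu']
                exact (hkey v hvP).symm
              · have huP := st.frontier y hyS u hu' (by rw [← hv']; exact Or.inr hadj)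
                rw [hv']
                exact hkey u huP
              · exact (st.comp u hu' v hv' hadj).imp hrtg hrtg
            · exact hcP'
            · intro _
              have h1 := st.pathHead hP
              rw [hP1] at h1
              cases A₀ with
              | nil => simpa using h1
              | cons c A₁ => simpa using h1
            · intro a ha
              rcases List.mem_append.1 ha with ha | ha
              · exact Finset.mem_insert_of_mem
                  (st.pathMem a (by rw [hP1]; exact List.mem_append_left _ ha))
              · rcases List.mem_cons.1 ha with rfl | ha
                · exact Finset.mem_insert_self _ _
                · exact Finset.mem_insert_of_mem
                    (st.pathMem a (by rw [hP1]; exact List.mem_append_right _ ha))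
            · have h2 : (y :: ((A₀ ++ [q]) ++ p :: B)).Nodup := by
                rw [← hP1]
                exact List.nodup_cons.2 ⟨hyP, st.pathNodup⟩
              exact (List.Perm.nodup_iff List.perm_middle).2 h2
            · intro z hz w hw hadj2
              rcases Finset.mem_insert.1 hw with hw' | hw'
              · subst hw'
                exact List.mem_append_right _ (List.mem_cons_self)
              · have hzS : z ∉ S := fun h => hz (Finset.mem_insert_of_mem h)
                have hwP := st.frontier z hzS w hw' hadj2
                rw [hP1] at hwP
                rcases List.mem_append.1 hwP with h | h
                · exact List.mem_append_left _ h
                · exact List.mem_append_right _ (List.mem_cons_of_mem _ h)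
        · -- attach as a child of x
          have hxy : H.adj x y := by
            rcases hyadj with h | h
            · exact h
            · exact absurd ⟨x, hxP, h⟩ hin
          set T' : V → V → Prop := fun a b => T a b ∨ (a = x ∧ b = y) with hT'
          have hmono : ∀ a b, T a b → T' a b := fun a b h => Or.inl h
          have hrtg : ∀ {a b}, Relation.ReflTransGen T a b → Relation.ReflTransGen T' a b :=
            fun h => Relation.ReflTransGen.mono hmono _ _ h
          refine ih (insert y S) T' r (P ++ [y])
            (by simp only [List.length_append, List.length_singleton]; omega) ?_
          refine ⟨?_, ?_, ?_, ?_, ?_, ?_, ?_, ?_, ?_, ?_, ?_, ?_⟩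
          · rintro u v (h | ⟨rfl, rfl⟩)
            exacts [st.sub _ _ h, hxy]
          · rintro u v (h | ⟨rfl, rfl⟩)
            · exact ⟨Finset.mem_insert_of_mem (st.dom _ _ h).1,
                Finset.mem_insert_of_mem (st.dom _ _ h).2⟩
            · exact ⟨Finset.mem_insert_of_mem hxS, Finset.mem_insert_self _ _⟩
          · exact Finset.mem_insert_of_mem st.rootMem
          · intro v hv
            rcases Finset.mem_insert.1 hv with rfl | hv
            · exact (hrtg (st.reach x hxS)).tail (Or.inr ⟨rfl, rfl⟩)
            · exact hrtg (st.reach v hv)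
          · rintro u (h | ⟨rfl, rfl⟩)
            · exact st.noIn u h
            · exact hyS st.rootMem
          · intro v hv hvr
            rcases Finset.mem_insert.1 hv with rfl | hv
            · refine ⟨x, Or.inr ⟨rfl, rfl⟩, ?_⟩
              rintro u (h | ⟨rfl, -⟩)
              · exact absurd (st.dom _ _ h).2 hyS
              · rfl
            · obtain ⟨u, hu, hun⟩ := st.uniq v hv hvr
              refine ⟨u, Or.inl hu, ?_⟩
              rintro u' (h | ⟨-, h2⟩)
              · exact hun u' h
              · exact absurd (h2 ▸ hv) hyS
          · intro u hu v hv hadj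
            have key : ∀ w ∈ S, (H.adj y w ∨ H.adj w y) → Relation.ReflTransGen T' w y := by
              intro w hw hadjw
              have hwP : w ∈ P := st.frontier y hyS w hw hadjw
              exact (hrtg (chain'_rtg_getLast st.pathChain hwP hP)).tail (Or.inr ⟨rfl, rfl⟩)
            rcases Finset.mem_insert.1 hu with hu' | hu' <;>
              rcases Finset.mem_insert.1 hv with hv' | hv'
            · subst hu'; subst hv'; exact Or.inl Relation.ReflTransGen.refl
            · subst hu'; exact Or.inr (key v hv' (Or.inl hadj))
            · subst hv'; exact Or.inl (key u hu' (Or.inr hadj))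
            · exact (st.comp u hu' v hv' hadj).imp hrtg hrtg
          · rw [List.Chain', List.isChain_append]
            refine ⟨st.pathChain.imp hmono, List.isChain_singleton y, ?_⟩
            intro a ha b hb
            simp only [List.head?_cons, Option.mem_def, Option.some.injEq] at hb
            subst hb
            have : a = x := by
              rw [List.getLast?_eq_getLast hP] at ha
              simpa using ha.symm
            exact Or.inr ⟨this, rfl⟩
          · intro _
            rw [List.head?_append, st.pathHead hP]
            rfl
          · intro p hp
            rcases List.mem_append.1 hp with h | h
            · exact Finset.mem_insert_of_mem (st.pathMem p h)
            · simp only [List.mem_singleton] at h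
              subst h; exact Finset.mem_insert_self _ _
          · rw [List.nodup_append]
            exact ⟨st.pathNodup, List.nodup_singleton y, by
              intro a haP b hay hab
              simp only [List.mem_singleton] at hay
              subst hay; subst hab; exact hyP haP⟩
          · intro z hz w hw hadj
            rcases Finset.mem_insert.1 hw with rfl | hw
            · exact List.mem_append_right _ (by simp)
            · have hzS : z ∉ S := fun h => hz (Finset.mem_insert_of_mem h)
              exact List.mem_append_left _ (st.frontier z hzS w hw hadj)
      · -- pop
        push_neg at hy
        obtain ⟨Q, x', hPeq0⟩ := List.eq_nil_or_concat P |>.resolve_left hP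
        have hPeq : P = Q ++ [x'] := by simpa [List.concat_eq_append] using hPeq0
        clear hPeq0
        have hx' : x' = x := by
          rw [hx]
          conv_lhs => rw [show x' = (Q ++ [x']).getLast (by simp) from by simp [List.getLast_append]]
          congr 1
          exact hPeq.symm
        subst hx'
        refine ih S T r Q ?_ ?_
        · have : P.length = Q.length + 1 := by rw [hPeq]; simp
          omega
        · refine ⟨st.sub, st.dom, st.rootMem, st.reach, st.noIn, st.uniq, st.comp, ?_, ?_, ?_, ?_, ?_⟩
          · exact (List.isChain_append.1 (hPeq ▸ st.pathChain)).1
          · intro hQ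
            have := st.pathHead hP
            rw [hPeq, List.head?_append] at this
            cases hh : Q.head? with
            | none => exact absurd (List.head?_eq_none_iff.1 hh) hQ
            | some a => rw [hh] at this; simpa [hh] using this
          · intro p hp; exact st.pathMem p (by rw [hPeq]; exact List.mem_append_left _ hp)
          · have := st.pathNodup; rw [hPeq] at this; exact (List.nodup_append.1 this).1
          · intro z hzS w hwS hadj
            have hw := st.frontier z hzS w hwS hadj
            rw [hPeq] at hw
            rcases List.mem_append.1 hw with h | h
            · exact h
            · simp only [List.mem_singleton] at h
              subst h
              have := hy z hzS
              tauto

end Main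

theorem elder_connected_exists_vineyard {V : Type} [Fintype V] (H : Dgraph V)
    (helder : H.Elder) (hconn : H.Connected) :
    ∃ (T : V → V → Prop) (r : V), IsVineyard H T r := by
  classical
  obtain ⟨r⟩ := hconn.1
  refine main_ind H helder hconn (2 * ({r} : Finset V)ᶜ.card + 1) {r} (fun _ _ => False) r [r]
    (by simp) ?_
  refine ⟨?_, ?_, ?_, ?_, ?_, ?_, ?_, ?_, ?_, ?_, ?_, ?_⟩
  · simp
  · simp
  · simp
  · intro v hv; simp at hv; subst hv; exact Relation.ReflTransGen.refl
  · simp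
  · intro v hv hne; simp at hv; exact absurd hv hne
  · intro u hu v hv hadj
    simp at hu hv; subst hu; subst hv
    exact absurd hadj (fun h => H.asym _ _ h h)
  · exact List.isChain_singleton r
  · simp
  · simp
  · simp
  · intro z hz w hw _; simpa using hw
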